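/- Let s ≥ 3 be an integer such that the binomial coefficient C(s−1, 2) is odd, and let G be the bipartite graph with bipartition (X, Y) where |X| = s, Y is in bijection with the 3-element subsets of X, and each vertex of Y is adjacent exactly to the three elements of its corresponding subset (so for every A ⊆ X with |A| = 3 there is exactly one v ∈ Y with N(v) = A). Then χ_so(G) = 2 and χ_pcf(G) ≥ |X|/2. -/

import Mathlib

/-- The simple graph generated by a relation (symmetrized, loops removed). -/
def graphOfRel {V : Type} (r : V → V → Prop) : SimpleGraph V where
  Adj x y := x ≠ y ∧ (r x y ∨ r y x)
  symm := ⟨fun _ _ h => ⟨h.1.symm, h.2.symm⟩⟩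
  loopless := ⟨fun _ h => h.1 rfl⟩

/-- Vertices: the set `X = Fin s` together with one vertex for each 3-element subset
of `X`. -/
abbrev TripleVertex (s : ℕ) : Type :=
  Fin s ⊕ {A : Finset (Fin s) // A.card = 3}

/-- Each subset-vertex is joined exactly to the three elements of its subset. -/
def tripleRel (s : ℕ) : TripleVertex s → TripleVertex s → Prop
  | Sum.inl x, Sum.inr A => x ∈ A.val
  | _, _ => False

/-- The bipartite graph with `X = Fin s` on one side and all 3-element subsets of `X`
on the other, each subset adjacent to its three elements. -/
def tripleGraph (s : ℕ) : SimpleGraph (TripleVertex s) :=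
  graphOfRel (tripleRel s)

/-- `G` has a proper conflict-free coloring with `k` colors. -/
def HasPCFColoring {V : Type} (G : SimpleGraph V) (k : ℕ) : Prop :=
  ∃ c : V → Fin k, (∀ u v : V, G.Adj u v → c u ≠ c v) ∧
    ∀ v : V, (G.neighborSet v).Nonempty →
      ∃ i : Fin k, {u | u ∈ G.neighborSet v ∧ c u = i}.ncard = 1

/-- `G` has a strong odd coloring with `k` colors. -/
def HasStrongOddColoring {V : Type} (G : SimpleGraph V) (k : ℕ) : Prop :=
  ∃ c : V → Fin k, (∀ u v : V, G.Adj u v → c u ≠ c v) ∧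
    ∀ v : V, (G.neighborSet v).Nonempty →
      ∀ i : Fin k, {u | u ∈ G.neighborSet v ∧ c u = i}.Nonempty →
        Odd {u | u ∈ G.neighborSet v ∧ c u = i}.ncard

lemma adj_inl_inr {s : ℕ} (x : Fin s) (A : {A : Finset (Fin s) // A.card = 3}) :
    (tripleGraph s).Adj (Sum.inl x) (Sum.inr A) ↔ x ∈ A.val := by
  simp [tripleGraph, graphOfRel, tripleRel]

lemma not_adj_inl_inl {s : ℕ} (x y : Fin s) :
    ¬ (tripleGraph s).Adj (Sum.inl x) (Sum.inl y) := by
  simp [tripleGraph, graphOfRel, tripleRel]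

lemma not_adj_inr_inr {s : ℕ} (A B : {A : Finset (Fin s) // A.card = 3}) :
    ¬ (tripleGraph s).Adj (Sum.inr A) (Sum.inr B) := by
  simp [tripleGraph, graphOfRel, tripleRel]

lemma adj_inr_inl {s : ℕ} (x : Fin s) (A : {A : Finset (Fin s) // A.card = 3}) :
    (tripleGraph s).Adj (Sum.inr A) (Sum.inl x) ↔ x ∈ A.val := by
  rw [(tripleGraph s).adj_comm]; exact adj_inl_inr x A

/-- If `C(s-1, 2)` is odd, then the graph of 3-element subsets of an `s`-element set has
strong odd chromatic number exactly `2` and proper conflict-free chromatic number at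
least `s / 2`. -/
theorem triple_graph_strongOdd_eq_two_pcf_ge (s : ℕ) (hs : 3 ≤ s)
    (hodd : Odd (Nat.choose (s - 1) 2)) :
    (HasStrongOddColoring (tripleGraph s) 2 ∧
      ∀ k : ℕ, HasStrongOddColoring (tripleGraph s) k → 2 ≤ k) ∧
    (∀ k : ℕ, HasPCFColoring (tripleGraph s) k → s ≤ 2 * k) := by
  -- an explicit 3-element subset, used for lower bounds
  have h3 : ∀ T : Finset (Fin s), T.card = 3 → T.Nonempty := by
    intro T hT
    exact Finset.card_pos.mp (by omega)
  constructor
  · constructor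
    · -- strong odd coloring with 2 colors
      refine ⟨Sum.elim (fun _ => (0 : Fin 2)) (fun _ => (1 : Fin 2)), ?_, ?_⟩
      · intro u v huv
        cases u with
        | inl x =>
          cases v with
          | inl y => exact absurd huv (not_adj_inl_inl x y)
          | inr A => simp
        | inr A =>
          cases v with
          | inl y => simp
          | inr B => exact absurd huv (not_adj_inr_inr A B)
      · intro v hv i hi
        cases v with
        | inl x =>
          fin_cases i
          · -- no neighbor has color 0
            exfalso
            obtain ⟨u, hu, hcu⟩ := hi
            cases u with
            | inl y => exact not_adj_inl_inl x y hu
            | inr A => simp at hcu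
          · -- all neighbors have color 1; count = C(s-1,2)
            have hset : {u | u ∈ (tripleGraph s).neighborSet (Sum.inl x) ∧
                Sum.elim (fun _ => (0 : Fin 2)) (fun _ => (1 : Fin 2)) u = ⟨1, by omega⟩}
                = {u : TripleVertex s | ∃ A : {A : Finset (Fin s) // A.card = 3},
                    x ∈ A.val ∧ u = Sum.inr A} := by
              ext u
              cases u with
              | inl y => simp [SimpleGraph.mem_neighborSet, not_adj_inl_inl x y]
              | inr A =>
                constructor
                · rintro ⟨hadj, -⟩
                  exact ⟨A, (adj_inl_inr x A).mp hadj, rfl⟩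
                · rintro ⟨B, hB, hBA⟩
                  obtain rfl := Sum.inr.inj hBA
                  exact ⟨(adj_inl_inr x A).mpr hB, rfl⟩
            rw [hset]
            set S : Set (TripleVertex s) := {u : TripleVertex s |
              ∃ A : {A : Finset (Fin s) // A.card = 3}, x ∈ A.val ∧ u = Sum.inr A} with hS
            have hfin : S.Finite := Set.toFinite _
            rw [Set.ncard_eq_toFinset_card _ hfin]
            have hcard : ((Finset.univ.erase x).powersetCard 2).card = hfin.toFinset.card := by
              refine Finset.card_bij
                (fun B hB => Sum.inr ⟨insert x B, ?_⟩) ?_ ?_ ?_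
              · obtain ⟨hsub, hc⟩ := Finset.mem_powersetCard.mp hB
                have hx : x ∉ B := fun h => (Finset.mem_erase.mp (hsub h)).1 rfl
                rw [Finset.card_insert_of_notMem hx, hc]
              · intro B hB
                rw [Set.Finite.mem_toFinset]
                exact ⟨_, Finset.mem_insert_self x B, rfl⟩
              · intro B₁ h₁ B₂ h₂ heq
                have := Sum.inr.inj heq
                have heq2 : insert x B₁ = insert x B₂ := congrArg Subtype.val this
                have hx₁ : x ∉ B₁ := fun h =>
                  (Finset.mem_erase.mp ((Finset.mem_powersetCard.mp h₁).1 h)).1 rfl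
                have hx₂ : x ∉ B₂ := fun h =>
                  (Finset.mem_erase.mp ((Finset.mem_powersetCard.mp h₂).1 h)).1 rfl
                rw [← Finset.erase_insert hx₁, ← Finset.erase_insert hx₂, heq2]
              · intro u hu
                rw [Set.Finite.mem_toFinset] at hu
                obtain ⟨A, hxA, rfl⟩ := hu
                have hB : A.val.erase x ∈ (Finset.univ.erase x).powersetCard 2 := by
                  rw [Finset.mem_powersetCard]
                  refine ⟨Finset.erase_subset_erase x (Finset.subset_univ _), ?_⟩
                  rw [Finset.card_erase_of_mem hxA, A.prop]
                exact ⟨A.val.erase x, hB,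
                  congrArg Sum.inr (Subtype.ext (Finset.insert_erase hxA))⟩
            rw [← hcard, Finset.card_powersetCard, Finset.card_erase_of_mem (Finset.mem_univ x),
              Finset.card_univ, Fintype.card_fin]
            exact hodd
        | inr A =>
          fin_cases i
          · -- neighbors are the 3 elements of A, all colored 0
            have hset : {u | u ∈ (tripleGraph s).neighborSet (Sum.inr A) ∧
                Sum.elim (fun _ => (0 : Fin 2)) (fun _ => (1 : Fin 2)) u = ⟨0, by omega⟩}
                = Sum.inl '' (A.val : Set (Fin s)) := by
              ext u
              cases u with
              | inl y => simp [SimpleGraph.mem_neighborSet, adj_inr_inl]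
              | inr B => simp [SimpleGraph.mem_neighborSet, not_adj_inr_inr A B]
            rw [hset, Set.ncard_image_of_injective _ Sum.inl_injective,
              Set.ncard_coe_finset, A.prop]
            exact ⟨1, rfl⟩
          · exfalso
            obtain ⟨u, hu, hcu⟩ := hi
            cases u with
            | inl y => simp at hcu
            | inr B => exact not_adj_inr_inr A B hu
    · -- lower bound 2 for strong odd chromatic number
      rintro k ⟨c, hprop, -⟩
      have h0 : (0 : ℕ) < s := by omega
      have h1 : (1 : ℕ) < s := by omega
      have h2 : (2 : ℕ) < s := by omega
      set A0 : Finset (Fin s) := {⟨0, h0⟩, ⟨1, h1⟩, ⟨2, h2⟩} with hA0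
      have hA0card : A0.card = 3 := by
        rw [hA0]
        rw [Finset.card_insert_of_notMem (by simp [Fin.ext_iff]),
          Finset.card_insert_of_notMem (by simp [Fin.ext_iff]), Finset.card_singleton]
      have hadj : (tripleGraph s).Adj (Sum.inl ⟨0, h0⟩) (Sum.inr ⟨A0, hA0card⟩) := by
        rw [adj_inl_inr]; simp [hA0]
      have hne := hprop _ _ hadj
      by_contra hk
      push_neg at hk
      interval_cases k
      · exact (c (Sum.inl ⟨0, h0⟩)).elim0
      · exact hne (Subsingleton.elim _ _)
  · -- PCF lower bound
    rintro k ⟨c, hprop, hpcf⟩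
    have hfib : ∀ i : Fin k,
        (Finset.univ.filter fun x : Fin s => c (Sum.inl x) = i).card ≤ 2 := by
      intro i
      by_contra h
      push_neg at h
      obtain ⟨T, hTsub, hT3⟩ := Finset.exists_subset_card_eq (show 3 ≤ _ from h)
      have hcolT : ∀ y ∈ T, c (Sum.inl y) = i := fun y hy =>
        (Finset.mem_filter.mp (hTsub hy)).2
      obtain ⟨y0, hy0⟩ := h3 T hT3
      have hnbhd : ((tripleGraph s).neighborSet (Sum.inr ⟨T, hT3⟩)).Nonempty :=
        ⟨Sum.inl y0, (adj_inr_inl y0 ⟨T, hT3⟩).mpr hy0⟩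
      obtain ⟨i', hi'⟩ := hpcf (Sum.inr ⟨T, hT3⟩) hnbhd
      by_cases hii : i' = i
      · subst hii
        have hset : {u | u ∈ (tripleGraph s).neighborSet (Sum.inr ⟨T, hT3⟩) ∧ c u = i'}
            = Sum.inl '' (T : Set (Fin s)) := by
          ext u
          cases u with
          | inl y =>
            simp only [Set.mem_setOf_eq, SimpleGraph.mem_neighborSet, adj_inr_inl,
              Set.mem_image, Finset.mem_coe]
            constructor
            · rintro ⟨hy, -⟩; exact ⟨y, hy, rfl⟩
            · rintro ⟨z, hz, hzy⟩
              cases Sum.inl.inj hzy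
              exact ⟨hz, hcolT _ hz⟩
          | inr B => simp [SimpleGraph.mem_neighborSet, not_adj_inr_inr]
        rw [hset, Set.ncard_image_of_injective _ Sum.inl_injective,
          Set.ncard_coe_finset, hT3] at hi'
        omega
      · have hset : {u | u ∈ (tripleGraph s).neighborSet (Sum.inr ⟨T, hT3⟩) ∧ c u = i'}
            = ∅ := by
          ext u
          cases u with
          | inl y =>
            simp only [Set.mem_setOf_eq, SimpleGraph.mem_neighborSet, adj_inr_inl,
              Set.mem_empty_iff_false, iff_false]
            rintro ⟨hy, hcy⟩
            exact hii (hcy.symm.trans (hcolT y hy))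
          | inr B => simp [SimpleGraph.mem_neighborSet, not_adj_inr_inr]
        rw [hset, Set.ncard_empty] at hi'
        omega
    have hsum : (Finset.univ : Finset (Fin s)).card =
        ∑ i : Fin k, (Finset.univ.filter fun x : Fin s => c (Sum.inl x) = i).card :=
      Finset.card_eq_sum_card_fiberwise (fun x _ => Finset.mem_univ (c (Sum.inl x)))
    have : s ≤ k * 2 := by
      calc s = (Finset.univ : Finset (Fin s)).card := by
              rw [Finset.card_univ, Fintype.card_fin]
        _ = ∑ i : Fin k, (Finset.univ.filter fun x : Fin s => c (Sum.inl x) = i).card := hsum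
        _ ≤ ∑ _i : Fin k, 2 := Finset.sum_le_sum fun i _ => hfib i
        _ = k * 2 := by simp [Finset.sum_const, Finset.card_univ, Nat.mul_comm]
    omega
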